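/- Let {a_{i,j}}_{1≤i,j≤n} be nonnegative reals, Π uniformly random on S_n, Z = ∑_i a_{i,Π(i)}, M = max_{i,j} a_{i,j}. Then for all x > 0, P(|Z - med(Z)| > sqrt(med(∑_i a_{i,Π(i)}²) · x) + x·M) ≤ 8 exp(-x/16). -/

import Mathlib

/-- Probability with respect to the uniform distribution on permutations of `{1,…,n}`. -/
noncomputable def Pr (n : ℕ) (p : Equiv.Perm (Fin n) → Prop) : ℝ :=
  (Nat.card {π : Equiv.Perm (Fin n) // p π} : ℝ) / (Nat.factorial n)

/-- Talagrand's set `U_A(π)` of `{0,1}`-vectors witnessing agreement with some `τ ∈ A`. -/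
def UA (n : ℕ) (A : Set (Equiv.Perm (Fin n))) (π : Equiv.Perm (Fin n)) :
    Set (Fin n → ℝ) :=
  {s | (∀ i, s i = 0 ∨ s i = 1) ∧ ∃ τ ∈ A, ∀ i, s i = 0 → τ i = π i}

/-- Talagrand's convex distance: squared Euclidean distance from `0` to the convex hull
of `U_A(π)`. -/
noncomputable def fA (n : ℕ) (A : Set (Equiv.Perm (Fin n))) (π : Equiv.Perm (Fin n)) : ℝ :=
  sInf ((fun v : Fin n → ℝ => ∑ i, (v i)^2) '' (convexHull ℝ (UA n A π)))


open Classical in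
lemma Pr_eq_filter (n : ℕ) (p : Equiv.Perm (Fin n) → Prop) :
    Pr n p = ((Finset.univ.filter p).card : ℝ) / (Nat.factorial n) := by
  unfold Pr
  rw [Nat.card_eq_fintype_card, Fintype.card_subtype]

lemma Pr_nonneg (n : ℕ) (p : Equiv.Perm (Fin n) → Prop) : 0 ≤ Pr n p :=
  div_nonneg (Nat.cast_nonneg _) (Nat.cast_nonneg _)

lemma Pr_le_one (n : ℕ) (p : Equiv.Perm (Fin n) → Prop) : Pr n p ≤ 1 := by
  unfold Pr
  rw [div_le_one (by positivity : (0:ℝ) < (Nat.factorial n : ℝ))]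
  have : Nat.card {π : Equiv.Perm (Fin n) // p π} ≤ Fintype.card (Equiv.Perm (Fin n)) := by
    classical
    rw [Nat.card_eq_fintype_card]
    exact Fintype.card_subtype_le _
  rw [Fintype.card_perm, Fintype.card_fin] at this
  exact_mod_cast this

lemma Pr_mono (n : ℕ) (p q : Equiv.Perm (Fin n) → Prop) (h : ∀ π, p π → q π) :
    Pr n p ≤ Pr n q := by
  classical
  unfold Pr
  have hcard : Nat.card {π : Equiv.Perm (Fin n) // p π} ≤
      Nat.card {π : Equiv.Perm (Fin n) // q π} := by
    rw [Nat.card_eq_fintype_card, Nat.card_eq_fintype_card]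
    exact Fintype.card_subtype_mono p q h
  have := (Nat.cast_le (α := ℝ)).mpr hcard
  gcongr

lemma Pr_union (n : ℕ) (p q : Equiv.Perm (Fin n) → Prop) :
    Pr n (fun π => p π ∨ q π) ≤ Pr n p + Pr n q := by
  classical
  unfold Pr
  rw [← add_div]
  have hcard : Nat.card {π : Equiv.Perm (Fin n) // p π ∨ q π} ≤
      Nat.card {π : Equiv.Perm (Fin n) // p π} + Nat.card {π : Equiv.Perm (Fin n) // q π} := by
    simp only [Nat.card_eq_fintype_card]
    exact Fintype.card_subtype_or p q
  have h2 := (Nat.cast_le (α := ℝ)).mpr hcard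
  push_cast at h2
  gcongr

lemma Pr_pos_exists (n : ℕ) (p : Equiv.Perm (Fin n) → Prop) (h : 0 < Pr n p) :
    ∃ π, p π := by
  by_contra hc
  push_neg at hc
  have : IsEmpty {π : Equiv.Perm (Fin n) // p π} := ⟨fun ⟨π, hπ⟩ => hc π hπ⟩
  rw [Pr, Nat.card_of_isEmpty] at h
  norm_num at h

lemma fA_nonneg (n : ℕ) (A : Set (Equiv.Perm (Fin n))) (π : Equiv.Perm (Fin n)) :
    0 ≤ fA n A π := by
  apply Real.sInf_nonneg
  rintro y ⟨v, -, rfl⟩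
  positivity

lemma key_lemma (n : ℕ) (b : Fin n → Fin n → ℝ) (hb : ∀ i j, 0 ≤ b i j)
    (A : Set (Equiv.Perm (Fin n))) (hA : A.Nonempty) (π : Equiv.Perm (Fin n)) :
    ∃ τ ∈ A, (∑ i, b i (π i)) - (∑ i, b i (τ i)) ≤
      Real.sqrt (∑ i, (b i (π i))^2) * Real.sqrt (fA n A π) := by
  obtain ⟨τ0, hτ0⟩ := hA
  -- UA is nonempty
  have hUAne : (UA n A π).Nonempty :=
    ⟨fun _ => 1, fun i => Or.inr rfl, τ0, hτ0, fun i h => absurd h one_ne_zero⟩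
  -- UA is finite
  have hUAfin : (UA n A π).Finite := by
    have hsub : (UA n A π) ⊆ Set.pi Set.univ (fun _ : Fin n => ({0,1} : Set ℝ)) := by
      intro s hs i _
      simpa using hs.1 i
    exact Set.Finite.subset (Set.Finite.pi fun _ => (Set.finite_singleton (1:ℝ)).insert 0) hsub
  have hcompact : IsCompact (convexHull ℝ (UA n A π)) := hUAfin.isCompact_convexHull ℝ
  have hhullne : (convexHull ℝ (UA n A π)).Nonempty :=
    hUAne.mono (subset_convexHull ℝ _)
  have hcont : Continuous (fun v : Fin n → ℝ => ∑ i, (v i)^2) := by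
    apply continuous_finset_sum
    intro i _
    exact (continuous_apply i).pow 2
  obtain ⟨v, hv_mem, hv_min⟩ := hcompact.exists_isMinOn hhullne hcont.continuousOn
  have hfv_le : (∑ i, (v i)^2) ≤ fA n A π := by
    unfold fA
    apply le_csInf ⟨_, Set.mem_image_of_mem _ hv_mem⟩
    rintro y ⟨w, hw, rfl⟩
    exact hv_min hw
  -- the convex set C
  set Zb : Equiv.Perm (Fin n) → ℝ := fun σ => ∑ i, b i (σ i) with hZb
  have hC : v ∈ {w : Fin n → ℝ | ∃ τ ∈ A, Zb π - Zb τ ≤ ∑ i, w i * b i (π i)} := by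
    apply convexHull_min ?sub ?conv hv_mem
    · -- UA ⊆ C
      rintro s ⟨hs01, τ, hτA, hτ⟩
      refine ⟨τ, hτA, ?_⟩
      rw [hZb]
      simp only
      rw [← Finset.sum_sub_distrib]
      apply Finset.sum_le_sum
      intro i _
      rcases hs01 i with h | h
      · rw [hτ i h, h, zero_mul, sub_self]
      · rw [h, one_mul]
        have := hb i (τ i)
        linarith
    · -- C is convex
      rintro w1 ⟨τ1, hτ1, h1⟩ w2 ⟨τ2, hτ2, h2⟩ α β hα hβ hαβ
      have hsum : ∑ i, (α • w1 + β • w2) i * b i (π i) =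
          α * (∑ i, w1 i * b i (π i)) + β * (∑ i, w2 i * b i (π i)) := by
        rw [Finset.mul_sum, Finset.mul_sum, ← Finset.sum_add_distrib]
        apply Finset.sum_congr rfl
        intro i _
        simp [Pi.add_apply, Pi.smul_apply, smul_eq_mul]
        ring
      rcases le_total (Zb τ1) (Zb τ2) with hle | hle
      · refine ⟨τ2, hτ2, ?_⟩
        rw [hsum]
        have e1 := mul_le_mul_of_nonneg_left h1 hα
        have e2 := mul_le_mul_of_nonneg_left h2 hβ
        have e3 : α * (Zb π - Zb τ2) ≤ α * (Zb π - Zb τ1) :=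
          mul_le_mul_of_nonneg_left (by linarith) hα
        have e4 : (α + β) * (Zb π - Zb τ2) = Zb π - Zb τ2 := by rw [hαβ]; ring
        nlinarith [e1, e2, e3, e4]
      · refine ⟨τ1, hτ1, ?_⟩
        rw [hsum]
        have e1 := mul_le_mul_of_nonneg_left h1 hα
        have e2 := mul_le_mul_of_nonneg_left h2 hβ
        have e3 : β * (Zb π - Zb τ1) ≤ β * (Zb π - Zb τ2) :=
          mul_le_mul_of_nonneg_left (by linarith) hβ
        have e4 : (α + β) * (Zb π - Zb τ1) = Zb π - Zb τ1 := by rw [hαβ]; ring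
        nlinarith [e1, e2, e3, e4]
  obtain ⟨τ, hτA, hle⟩ := hC
  refine ⟨τ, hτA, ?_⟩
  have cs := Finset.sum_mul_sq_le_sq_mul_sq Finset.univ v (fun i => b i (π i))
  have h1 : (∑ i, v i * b i (π i)) ≤
      Real.sqrt (∑ i, (v i)^2) * Real.sqrt (∑ i, (b i (π i))^2) := by
    calc ∑ i, v i * b i (π i) ≤ |∑ i, v i * b i (π i)| := le_abs_self _
      _ = Real.sqrt ((∑ i, v i * b i (π i))^2) := (Real.sqrt_sq_eq_abs _).symm
      _ ≤ Real.sqrt ((∑ i, (v i)^2) * ∑ i, (b i (π i))^2) := Real.sqrt_le_sqrt cs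
      _ = Real.sqrt (∑ i, (v i)^2) * Real.sqrt (∑ i, (b i (π i))^2) :=
          Real.sqrt_mul (by positivity) _
  have h2 : Real.sqrt (∑ i, (v i)^2) ≤ Real.sqrt (fA n A π) := Real.sqrt_le_sqrt hfv_le
  calc Zb π - Zb τ ≤ ∑ i, v i * b i (π i) := hle
    _ ≤ Real.sqrt (∑ i, (v i)^2) * Real.sqrt (∑ i, (b i (π i))^2) := h1
    _ ≤ Real.sqrt (∑ i, (b i (π i))^2) * Real.sqrt (fA n A π) := by
        rw [mul_comm]
        exact mul_le_mul_of_nonneg_left h2 (Real.sqrt_nonneg _)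

/-- Concentration of a permuted sum of nonnegative terms around its median, assuming
Talagrand's convex-distance inequality for random permutations. -/
theorem stmt_9 (n : ℕ) (hn : 0 < n) (a : Fin n → Fin n → ℝ)
    (ha : ∀ i j, 0 ≤ a i j)
    (M : ℝ) (hM : IsGreatest (Set.range fun p : Fin n × Fin n => a p.1 p.2) M)
    (m m2 : ℝ)
    (hm1 : Pr n (fun π => (∑ i, a i (π i)) ≥ m) ≥ 1/2)
    (hm2 : Pr n (fun π => (∑ i, a i (π i)) ≤ m) ≥ 1/2)
    (hm21 : Pr n (fun π => (∑ i, (a i (π i))^2) ≥ m2) ≥ 1/2)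
    (hm22 : Pr n (fun π => (∑ i, (a i (π i))^2) ≤ m2) ≥ 1/2)
    (talagrand : ∀ (A : Set (Equiv.Perm (Fin n))) (t : ℝ), 0 < t →
      Pr n (fun π => fA n A π ≥ t^2) * Pr n (fun π => π ∈ A) ≤ Real.exp (-t^2/16)) :
    ∀ x : ℝ, 0 < x →
      Pr n (fun π => |(∑ i, a i (π i)) - m| > Real.sqrt (m2 * x) + x * M)
        ≤ 8 * Real.exp (-x/16) := by
  intro x hx
  set e := Real.exp (-x/16) with he
  have he_pos : 0 < e := Real.exp_pos _
  by_cases htriv : 1 ≤ 8 * e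
  · exact le_trans (Pr_le_one _ _) htriv
  push_neg at htriv
  -- basic facts
  have hMub : ∀ i j, a i j ≤ M := fun i j => hM.2 ⟨(i, j), rfl⟩
  have hMnn : 0 ≤ M := le_trans (ha ⟨0, hn⟩ ⟨0, hn⟩) (hMub ⟨0, hn⟩ ⟨0, hn⟩)
  have hSnn : ∀ π : Equiv.Perm (Fin n), 0 ≤ ∑ i, (a i (π i))^2 := by
    intro π; positivity
  -- the set B
  set B : Set (Equiv.Perm (Fin n)) := {π | (∑ i, (a i (π i))^2) ≤ m2} with hB
  have hBne : B.Nonempty := Pr_pos_exists n _ (lt_of_lt_of_le (by norm_num) hm22)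
  have hm2nn : 0 ≤ m2 := by
    obtain ⟨π, hπ⟩ := hBne
    exact le_trans (hSnn π) hπ
  -- the set A1
  set A1 : Set (Equiv.Perm (Fin n)) := {π | (∑ i, a i (π i)) ≤ m} with hA1
  have hA1ne : A1.Nonempty := Pr_pos_exists n _ (lt_of_lt_of_le (by norm_num) hm2)
  -- Talagrand bound for a set with probability ≥ 1/2
  have talag : ∀ A : Set (Equiv.Perm (Fin n)),
      Pr n (fun π => π ∈ A) ≥ 1/2 → Pr n (fun π => fA n A π ≥ x) ≤ 2 * e := by
    intro A hPA
    have tb := talagrand A (Real.sqrt x) (Real.sqrt_pos.mpr hx)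
    simp only [Real.sq_sqrt hx.le] at tb
    have h0 := Pr_nonneg n (fun π => fA n A π ≥ x)
    nlinarith [mul_le_mul_of_nonneg_left hPA h0]
  have hfB : Pr n (fun π => fA n B π ≥ x) ≤ 2 * e := talag B hm22
  have hfA1 : Pr n (fun π => fA n A1 π ≥ x) ≤ 2 * e := talag A1 hm2
  -- quadratic bound: sqrt(S π) ≤ sqrt m2 + M * sqrt (fA B π)
  have hsqrtS : ∀ π : Equiv.Perm (Fin n),
      Real.sqrt (∑ i, (a i (π i))^2) ≤ Real.sqrt m2 + M * Real.sqrt (fA n B π) := by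
    intro π
    obtain ⟨τ, hτB, hkey⟩ := key_lemma n (fun i j => (a i j)^2)
      (fun i j => sq_nonneg _) B hBne π
    have hτ : (∑ i, (a i (τ i))^2) ≤ m2 := hτB
    have h4 : Real.sqrt (∑ i, ((a i (π i))^2)^2) ≤
        M * Real.sqrt (∑ i, (a i (π i))^2) := by
      have : (∑ i, ((a i (π i))^2)^2) ≤ M^2 * ∑ i, (a i (π i))^2 := by
        rw [Finset.mul_sum]
        apply Finset.sum_le_sum
        intro i _
        have h1 := ha i (π i)
        have h2 := hMub i (π i)
        have haM : (a i (π i))^2 ≤ M^2 := by nlinarith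
        nlinarith [mul_le_mul_of_nonneg_right haM (sq_nonneg (a i (π i)))]
      calc Real.sqrt (∑ i, ((a i (π i))^2)^2) ≤ Real.sqrt (M^2 * ∑ i, (a i (π i))^2) :=
            Real.sqrt_le_sqrt this
        _ = M * Real.sqrt (∑ i, (a i (π i))^2) := by
            rw [Real.sqrt_mul (sq_nonneg M), Real.sqrt_sq hMnn]
    have hSb : (∑ i, (a i (π i))^2) ≤ m2 +
        (M * Real.sqrt (∑ i, (a i (π i))^2)) * Real.sqrt (fA n B π) := by
      have := mul_le_mul_of_nonneg_right h4 (Real.sqrt_nonneg (fA n B π))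
      linarith
    -- solve the quadratic
    by_contra hcon
    push_neg at hcon
    set u := Real.sqrt (∑ i, (a i (π i))^2) with hu
    set s := Real.sqrt m2 with hs
    set c := M * Real.sqrt (fA n B π) with hc
    have hu0 : 0 ≤ u := Real.sqrt_nonneg _
    have hs0 : 0 ≤ s := Real.sqrt_nonneg _
    have hc0 : 0 ≤ c := mul_nonneg hMnn (Real.sqrt_nonneg _)
    have hu2 : u^2 = ∑ i, (a i (π i))^2 := Real.sq_sqrt (hSnn π)
    have hs2 : s^2 = m2 := Real.sq_sqrt hm2nn
    nlinarith [hSb, hcon, hu2, hs2, hu0, hs0, hc0]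
  -- the common arithmetic: sqrt Sπ * sqrt(fA') ≤ sqrt(m2 x) + x M when fA' ≤ x, fB ≤ x
  have harith : ∀ π : Equiv.Perm (Fin n), ∀ y : ℝ, 0 ≤ y → y ≤ x → fA n B π ≤ x →
      Real.sqrt (∑ i, (a i (π i))^2) * Real.sqrt y ≤ Real.sqrt (m2 * x) + x * M := by
    intro π y hy0 hyx hfBx
    have h1 : Real.sqrt y ≤ Real.sqrt x := Real.sqrt_le_sqrt hyx
    have h2 : Real.sqrt (fA n B π) ≤ Real.sqrt x := Real.sqrt_le_sqrt hfBx
    have h3 : Real.sqrt (∑ i, (a i (π i))^2) ≤ Real.sqrt m2 + M * Real.sqrt x := by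
      have := hsqrtS π
      have := mul_le_mul_of_nonneg_left h2 hMnn
      linarith
    calc Real.sqrt (∑ i, (a i (π i))^2) * Real.sqrt y
        ≤ (Real.sqrt m2 + M * Real.sqrt x) * Real.sqrt x := by
          apply mul_le_mul h3 h1 (Real.sqrt_nonneg _)
          positivity
      _ = Real.sqrt (m2 * x) + x * M := by
          rw [add_mul, mul_assoc, Real.mul_self_sqrt hx.le, Real.sqrt_mul hm2nn]
          ring
  -- upper tail
  have hup : ∀ π : Equiv.Perm (Fin n),
      (∑ i, a i (π i)) - m > Real.sqrt (m2 * x) + x * M →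
      fA n A1 π ≥ x ∨ fA n B π ≥ x := by
    intro π hπ
    by_contra hcon
    push_neg at hcon
    obtain ⟨τ, hτA, hkey⟩ := key_lemma n a ha A1 hA1ne π
    have hτ : (∑ i, a i (τ i)) ≤ m := hτA
    have := harith π (fA n A1 π) (fA_nonneg n A1 π) hcon.1.le hcon.2.le
    linarith
  have hupper : Pr n (fun π => (∑ i, a i (π i)) - m > Real.sqrt (m2 * x) + x * M)
      ≤ 4 * e := by
    calc Pr n (fun π => (∑ i, a i (π i)) - m > Real.sqrt (m2 * x) + x * M)
        ≤ Pr n (fun π => fA n A1 π ≥ x ∨ fA n B π ≥ x) := Pr_mono n _ _ hup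
      _ ≤ Pr n (fun π => fA n A1 π ≥ x) + Pr n (fun π => fA n B π ≥ x) := Pr_union n _ _
      _ ≤ 4 * e := by linarith
  -- lower tail
  have hlower : Pr n (fun π => m - (∑ i, a i (π i)) > Real.sqrt (m2 * x) + x * M)
      ≤ 4 * e := by
    set A' : Set (Equiv.Perm (Fin n)) :=
      {π | (∑ i, a i (π i)) < m - (Real.sqrt (m2 * x) + x * M)} with hA'
    by_cases hA'ne : A'.Nonempty
    · have hlow : ∀ π : Equiv.Perm (Fin n), (∑ i, a i (π i)) ≥ m →
          fA n A' π ≥ x ∨ fA n B π ≥ x := by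
        intro π hπ
        by_contra hcon
        push_neg at hcon
        obtain ⟨τ, hτA, hkey⟩ := key_lemma n a ha A' hA'ne π
        have hτ : (∑ i, a i (τ i)) < m - (Real.sqrt (m2 * x) + x * M) := hτA
        have := harith π (fA n A' π) (fA_nonneg n A' π) hcon.1.le hcon.2.le
        linarith
      have hfA'big : Pr n (fun π => fA n A' π ≥ x) ≥ 1/2 - 2 * e := by
        have c1 : Pr n (fun π => (∑ i, a i (π i)) ≥ m)
            ≤ Pr n (fun π => fA n A' π ≥ x ∨ fA n B π ≥ x) := Pr_mono n _ _ hlow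
        have c2 := Pr_union n (fun π => fA n A' π ≥ x) (fun π => fA n B π ≥ x)
        linarith
      have tb := talagrand A' (Real.sqrt x) (Real.sqrt_pos.mpr hx)
      simp only [Real.sq_sqrt hx.le] at tb
      have hPA'nn := Pr_nonneg n (fun π => π ∈ A')
      have hq : Pr n (fun π => fA n A' π ≥ x) ≥ 1/4 := by linarith
      have hPA' : Pr n (fun π => π ∈ A') ≤ 4 * e := by
        nlinarith [mul_le_mul_of_nonneg_right hq hPA'nn]
      calc Pr n (fun π => m - (∑ i, a i (π i)) > Real.sqrt (m2 * x) + x * M)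
          ≤ Pr n (fun π => π ∈ A') := by
            apply Pr_mono
            intro π hπ
            show (∑ i, a i (π i)) < m - (Real.sqrt (m2 * x) + x * M)
            linarith
        _ ≤ 4 * e := hPA'
    · -- A' is empty, so the event has probability 0
      rcases eq_or_lt_of_le
        (Pr_nonneg n (fun π => m - (∑ i, a i (π i)) > Real.sqrt (m2 * x) + x * M)) with
        hzero | hpos
      · rw [← hzero]; positivity
      · exfalso
        obtain ⟨π, hπ⟩ := Pr_pos_exists n _ hpos
        exact hA'ne ⟨π, by show (∑ i, a i (π i)) < m - (Real.sqrt (m2 * x) + x * M); linarith⟩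
  -- combine
  calc Pr n (fun π => |(∑ i, a i (π i)) - m| > Real.sqrt (m2 * x) + x * M)
      ≤ Pr n (fun π => ((∑ i, a i (π i)) - m > Real.sqrt (m2 * x) + x * M) ∨
          (m - (∑ i, a i (π i)) > Real.sqrt (m2 * x) + x * M)) := by
        apply Pr_mono
        intro π hπ
        rcases lt_abs.mp hπ with h | h
        · exact Or.inl h
        · exact Or.inr (by linarith)
    _ ≤ Pr n (fun π => (∑ i, a i (π i)) - m > Real.sqrt (m2 * x) + x * M) +
        Pr n (fun π => m - (∑ i, a i (π i)) > Real.sqrt (m2 * x) + x * M) := Pr_union n _ _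
    _ ≤ 8 * e := by linarith
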